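/- Let s ≥ 1 + 3γ with γ ∈ (0,1], η > 0, t_{k-1} > s, η_{k-1} := η t_{k-1}/(2(t_{k-1} - s)), a_k := η_{k-1} t_{k-1}(t_{k-1} - s) and β ≥ 0. For vectors g, u, z, x⋆ in an inner product space with ⟪g, u - x⋆⟫ ≥ β‖g‖², the quantity L := (a_k/2)‖g‖² + s t_{k-1} ⟪g, u - z⟫ + (s²(s-1)/(2 η_{k-1} γ))‖z - x⋆‖² satisfies L ≥ (η t_{k-1}²/8)‖g‖² + (s²(t_{k-1} - 3s)/(η t_{k-1}))‖z - x⋆‖². -/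

import Mathlib

open RealInnerProductSpace

set_option maxHeartbeats 1000000 in
theorem lyapunov_lower_bound
    {E : Type*} [NormedAddCommGroup E] [InnerProductSpace ℝ E]
    (γ s η tkm1 β : ℝ)
    (hγ0 : 0 < γ) (hγ1 : γ ≤ 1) (hs : 1 + 3 * γ ≤ s) (hη : 0 < η)
    (ht : s < tkm1) (hβ : 0 ≤ β)
    (ηkm1 ak : ℝ)
    (hηkm1 : ηkm1 = η * tkm1 / (2 * (tkm1 - s)))
    (hak : ak = ηkm1 * tkm1 * (tkm1 - s))
    (g u z xs : E)
    (hco : ⟪g, u - xs⟫ ≥ β * ‖g‖^2)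
    (L : ℝ)
    (hL : L = (ak / 2) * ‖g‖^2 + s * tkm1 * ⟪g, u - z⟫
        + (s^2 * (s - 1) / (2 * ηkm1 * γ)) * ‖z - xs‖^2) :
    L ≥ (η * tkm1^2 / 8) * ‖g‖^2 + (s^2 * (tkm1 - 3 * s) / (η * tkm1)) * ‖z - xs‖^2 := by
  have hs0 : 0 < s := by linarith
  have ht0 : 0 < tkm1 := by linarith
  have hts : 0 < tkm1 - s := by linarith
  set X := ‖g‖^2 with hX
  set Y := ‖z - xs‖^2 with hY
  have hXnn : 0 ≤ X := by positivity
  have hYnn : 0 ≤ Y := by positivity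
  set A := ⟪g, u - xs⟫ with hA
  set P := ⟪g, z - xs⟫ with hP
  have hAnn : 0 ≤ A := le_trans (by positivity) hco
  have hsplit : ⟪g, u - z⟫ = A - P := by
    rw [hA, hP, ← inner_sub_right]
    congr 1
    abel
  have cs : P ≤ ‖g‖ * ‖z - xs‖ := real_inner_le_norm g (z - xs)
  have key : 8 * s * η * tkm1 * P ≤ 16 * s^2 * Y + η^2 * tkm1^2 * X := by
    have h1 : 0 ≤ (4 * s * ‖z - xs‖ - η * tkm1 * ‖g‖)^2 := sq_nonneg _
    have h2 : 8 * s * η * tkm1 * P ≤ 8 * s * η * tkm1 * (‖g‖ * ‖z - xs‖) := by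
      apply mul_le_mul_of_nonneg_left cs
      positivity
    simp only [hX, hY] at *
    nlinarith [h1, h2]
  have hak2 : ak = η * tkm1^2 / 2 := by
    rw [hak, hηkm1]
    field_simp
  have hfrac : s^2 * (s - 1) / (2 * ηkm1 * γ)
      = s^2 * (s - 1) * (tkm1 - s) / (η * tkm1 * γ) := by
    rw [hηkm1]
    rw [div_eq_div_iff (by positivity) (by positivity)]
    field_simp
  rw [hL, hak2, hfrac, hsplit, ge_iff_le, ← sub_nonneg]
  have hden : (0:ℝ) < 8 * η * tkm1 * γ := by positivity
  have hpoly : (8 * η * tkm1 * γ) *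
      ((η * tkm1^2 / 2 / 2) * X + s * tkm1 * (A - P)
        + s^2 * (s - 1) * (tkm1 - s) / (η * tkm1 * γ) * Y
        - ((η * tkm1^2 / 8) * X + s^2 * (tkm1 - 3 * s) / (η * tkm1) * Y))
      = η^2 * tkm1^3 * γ * X + 8 * η * γ * s * tkm1^2 * A
        - 8 * η * γ * s * tkm1^2 * P
        + 8 * s^2 * (s - 1) * (tkm1 - s) * Y - 8 * s^2 * γ * (tkm1 - 3 * s) * Y := by
    field_simp
    ring
  have hpos : 0 ≤ (8 * η * tkm1 * γ) *
      ((η * tkm1^2 / 2 / 2) * X + s * tkm1 * (A - P)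
        + s^2 * (s - 1) * (tkm1 - s) / (η * tkm1 * γ) * Y
        - ((η * tkm1^2 / 8) * X + s^2 * (tkm1 - 3 * s) / (η * tkm1) * Y)) := by
    rw [hpoly]
    nlinarith [mul_nonneg (mul_nonneg (le_of_lt hγ0) (le_of_lt ht0))
        (sub_nonneg.mpr key),
      mul_nonneg (mul_nonneg (mul_nonneg (by positivity : (0:ℝ) ≤ 8 * s^2) hYnn)
        (le_of_lt hts)) (by linarith : (0:ℝ) ≤ s - 1 - 3 * γ),
      mul_nonneg (by positivity : (0:ℝ) ≤ 8 * η * γ * s * tkm1^2) hAnn]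
  nlinarith [hpos, hden]
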